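/- arXiv:2005.13100 — 4 statements merged into one kernel-verified Lean document; each statement's English description precedes it below -/
import Mathlib

section
/- Let m > 0, let X be a random variable uniformly distributed on [-1,1], and let W be an independent Gaussian random variable with mean 0 and variance m². Then the second moment of cos(π W X) satisfies E[cos²(π W X)] = 1/2 + erf(√2 m π) / (4 √(2π) m), where erf denotes the Gauss error function. -/
open Real MeasureTheory ProbabilityTheory

/-- The Gauss error function `erf(z) = (2/√π) ∫_0^z e^{-t²} dt`. -/
noncomputable def erf (z : ℝ) : ℝ := (2 / Real.sqrt π) * ∫ t in (0:ℝ)..z, Real.exp (-t ^ 2)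

section Aux
open Complex NNReal ENNReal

lemma cos_gaussian_integral {b : ℝ} (hb : 0 < b) (t : ℝ) :
    ∫ x : ℝ, Real.cos (t * x) * Real.exp (-b * x ^ 2) =
      Real.sqrt (π / b) * Real.exp (-t ^ 2 / (4 * b)) := by
  have hb' : 0 < (b : ℂ).re := by simpa using hb
  have h := fourierIntegral_gaussian hb' (t : ℂ)
  have hint : Integrable (fun x : ℝ => cexp (I * t * x) * cexp (-(b : ℂ) * x ^ 2)) := by
    have := integrable_cexp_quadratic hb' (I * t) 0
    refine this.congr (Filter.Eventually.of_forall fun x => ?_)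
    simp only [add_zero, ← Complex.exp_add]
    ring_nf
  have hre : ∀ x : ℝ, (cexp (I * t * x) * cexp (-(b : ℂ) * x ^ 2)).re
      = Real.cos (t * x) * Real.exp (-b * x ^ 2) := by
    intro x
    have h1 : cexp (I * t * x) = cexp ((t * x : ℝ) * I) := by push_cast; ring_nf
    have h2 : cexp (-(b : ℂ) * x ^ 2) = ((Real.exp (-b * x ^ 2) : ℝ) : ℂ) := by
      rw [Complex.ofReal_exp]; push_cast; ring_nf
    rw [h1, h2, mul_comm, Complex.re_ofReal_mul, Complex.exp_ofReal_mul_I_re]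
    ring
  have hL : (∫ x : ℝ, cexp (I * t * x) * cexp (-(b : ℂ) * x ^ 2)).re
      = ∫ x : ℝ, Real.cos (t * x) * Real.exp (-b * x ^ 2) := by
    rw [← RCLike.re_to_complex, ← integral_re hint]
    exact integral_congr_ae (Filter.Eventually.of_forall fun x => by
      simpa [RCLike.re_to_complex] using hre x)
  have hR : (((π : ℂ) / b) ^ (1 / 2 : ℂ) * cexp (-(t : ℂ) ^ 2 / (4 * b))).re
      = Real.sqrt (π / b) * Real.exp (-t ^ 2 / (4 * b)) := by
    have h3 : ((π : ℂ) / b) ^ (1 / 2 : ℂ) = ((Real.sqrt (π / b) : ℝ) : ℂ) := by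
      rw [show ((π : ℂ) / b) = ((π / b : ℝ) : ℂ) by push_cast; ring,
        show (1 / 2 : ℂ) = ((1 / 2 : ℝ) : ℂ) by norm_num,
        ← Complex.ofReal_cpow (le_of_lt (div_pos Real.pi_pos hb)),
        Real.sqrt_eq_rpow]
    have h4 : cexp (-(t : ℂ) ^ 2 / (4 * b)) = ((Real.exp (-t ^ 2 / (4 * b)) : ℝ) : ℂ) := by
      rw [Complex.ofReal_exp]; push_cast; ring_nf
    rw [h3, h4, ← Complex.ofReal_mul, Complex.ofReal_re]
  rw [← hL, h, hR]

lemma integral_cos_gaussianReal {v : ℝ≥0} (hv : v ≠ 0) (s : ℝ) :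
    ∫ w, Real.cos (s * w) ∂(gaussianReal 0 v) = Real.exp (-(v : ℝ) * s ^ 2 / 2) := by
  have hvpos : (0 : ℝ) < v := by positivity
  rw [gaussianReal_of_var_ne_zero 0 hv]
  have hmeas : Measurable (fun x => (gaussianPDFReal 0 v x).toNNReal) :=
    (measurable_gaussianPDFReal 0 v).real_toNNReal
  have hd : (gaussianPDF 0 v) = fun x => ((gaussianPDFReal 0 v x).toNNReal : ℝ≥0∞) := rfl
  rw [hd, integral_withDensity_eq_integral_smul hmeas]
  have key := cos_gaussian_integral (b := (2 * v)⁻¹) (by positivity) s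
  have heq : ∀ x : ℝ, (gaussianPDFReal 0 v x).toNNReal • Real.cos (s * x)
      = (Real.sqrt (2 * π * v))⁻¹ * (Real.cos (s * x) * Real.exp (-(2 * (v:ℝ))⁻¹ * x ^ 2)) := by
    intro x
    have harg : -(x - 0) ^ 2 / (2 * (v:ℝ)) = -(2 * (v:ℝ))⁻¹ * x ^ 2 := by
      field_simp
      ring
    rw [NNReal.smul_def, smul_eq_mul, Real.coe_toNNReal _ (gaussianPDFReal_nonneg 0 v x),
      gaussianPDFReal, harg]
    ring
  rw [integral_congr_ae (Filter.Eventually.of_forall heq), integral_const_mul, key]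
  have h5 : π / (2 * (v:ℝ))⁻¹ = 2 * π * v := by field_simp
  have h6 : -s ^ 2 / (4 * (2 * (v:ℝ))⁻¹) = -(v:ℝ) * s ^ 2 / 2 := by field_simp; ring
  rw [h5, h6, ← mul_assoc, inv_mul_cancel₀ (by positivity : Real.sqrt (2 * π * v) ≠ 0), one_mul]

lemma integrable_cos_gaussian {μ : Measure ℝ} [IsProbabilityMeasure μ] (c : ℝ) :
    Integrable (fun w : ℝ => Real.cos (c * w)) μ := by
  refine (integrable_const (1 : ℝ)).mono' ?_ ?_
  · exact (Real.continuous_cos.comp (continuous_const.mul continuous_id)).aestronglyMeasurable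
  · filter_upwards with w
    simpa using Real.abs_cos_le_one (c * w)

lemma integral_cos_sq_gaussianReal {v : ℝ≥0} (hv : v ≠ 0) (s : ℝ) :
    ∫ w, Real.cos (s * w) ^ 2 ∂(gaussianReal 0 v)
      = 1 / 2 + Real.exp (-(v : ℝ) * (2 * s) ^ 2 / 2) / 2 := by
  have h1 : ∀ w : ℝ, Real.cos (s * w) ^ 2 = 1 / 2 + Real.cos ((2 * s) * w) / 2 := by
    intro w
    rw [Real.cos_sq]
    ring_nf
  simp_rw [h1]
  rw [integral_add (integrable_const _) ((integrable_cos_gaussian (2 * s)).div_const 2)]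
  simp only [integral_div]
  rw [integral_cos_gaussianReal hv (2 * s), integral_const]
  simp

end Aux

open NNReal in
/-- If `X` is uniform on `[-1,1]`, `W` is Gaussian `N(0, m²)` with `m > 0`, and `X`, `W` are
independent, then `E[cos²(π W X)] = 1/2 + erf(√2 m π)/(4 √(2π) m)`. -/
theorem second_moment_cos_hidden_node
    {Ω : Type*} [MeasureSpace Ω] [IsProbabilityMeasure (ℙ : Measure Ω)]
    (m : ℝ) (hm : 0 < m) (X W : Ω → ℝ)
    (hX : MeasureTheory.pdf.IsUniform X (Set.Icc (-1:ℝ) 1) ℙ)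
    (hW : Measure.map W ℙ = gaussianReal 0 ⟨m ^ 2, sq_nonneg m⟩)
    (hindep : IndepFun X W ℙ) :
    ∫ ω, (Real.cos (π * W ω * X ω)) ^ 2 ∂ℙ =
      1 / 2 + erf (Real.sqrt 2 * m * π) / (4 * Real.sqrt (2 * π) * m) := by
  set c : ℝ := Real.sqrt 2 * m * π with hc_def
  have hc_pos : 0 < c := by positivity
  set v : ℝ≥0 := (⟨m ^ 2, sq_nonneg m⟩ : ℝ≥0) with hv_def
  have hv : v ≠ 0 := by
    intro h
    exact (pow_ne_zero 2 hm.ne') (congrArg NNReal.toReal h)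
  have hIcc0 : (volume (Set.Icc (-1:ℝ) 1)) = ENNReal.ofReal 2 := by
    rw [Real.volume_Icc]; norm_num
  have hXm : AEMeasurable X ℙ :=
    hX.aemeasurable (by rw [hIcc0]; simp) (by rw [hIcc0]; simp)
  have hWm : AEMeasurable W ℙ := by
    by_contra h
    rw [Measure.map_of_not_aemeasurable h] at hW
    have h1 := measure_univ (μ := gaussianReal 0 v)
    rw [← hW] at h1
    simp at h1
  have hjoint : Measure.map (fun ω => (X ω, W ω)) ℙ = (Measure.map X ℙ).prod (Measure.map W ℙ) :=
    (indepFun_iff_map_prod_eq_prod_map_map hXm hWm).mp hindep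
  have hpair : AEMeasurable (fun ω => (X ω, W ω)) ℙ := hXm.prodMk hWm
  have hfc : Continuous (fun p : ℝ × ℝ => Real.cos (π * p.2 * p.1) ^ 2) := by fun_prop
  haveI : IsProbabilityMeasure (Measure.map X ℙ) := Measure.isProbabilityMeasure_map hXm
  haveI : IsProbabilityMeasure (Measure.map W ℙ) := by rw [hW]; infer_instance
  have hintf : Integrable (fun p : ℝ × ℝ => Real.cos (π * p.2 * p.1) ^ 2)
      ((Measure.map X ℙ).prod (Measure.map W ℙ)) := by
    refine (integrable_const (1:ℝ)).mono' hfc.aestronglyMeasurable ?_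
    filter_upwards with p
    rw [Real.norm_eq_abs, abs_pow]
    exact pow_le_one₀ (abs_nonneg _) (Real.abs_cos_le_one _)
  have step1 : ∫ ω, Real.cos (π * W ω * X ω) ^ 2 ∂ℙ
      = ∫ p : ℝ × ℝ, Real.cos (π * p.2 * p.1) ^ 2 ∂((Measure.map X ℙ).prod (Measure.map W ℙ)) := by
    rw [← hjoint, integral_map hpair hfc.aestronglyMeasurable]
  rw [step1, MeasureTheory.integral_prod _ hintf]
  have hinner : ∀ x : ℝ, (∫ w, Real.cos (π * w * x) ^ 2 ∂(Measure.map W ℙ))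
      = 1 / 2 + Real.exp (-(x * c) ^ 2) / 2 := by
    intro x
    rw [hW]
    have h1 : ∀ w : ℝ, π * w * x = (π * x) * w := fun w => by ring
    simp_rw [h1]
    rw [integral_cos_sq_gaussianReal hv (π * x)]
    congr 3
    have h2 : Real.sqrt 2 ^ 2 = 2 := Real.sq_sqrt (by norm_num)
    have h3 : (v : ℝ) = m ^ 2 := rfl
    rw [h3, hc_def]
    linear_combination (m ^ 2 * π ^ 2 * x ^ 2) * h2
  have step2 : (∫ x, ∫ w, Real.cos (π * w * x) ^ 2 ∂(Measure.map W ℙ) ∂(Measure.map X ℙ))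
      = ∫ x, (1 / 2 + Real.exp (-(x * c) ^ 2) / 2) ∂(Measure.map X ℙ) :=
    integral_congr_ae (Filter.Eventually.of_forall fun x => hinner x)
  rw [step2]
  have hXlaw : Measure.map X ℙ = (volume (Set.Icc (-1:ℝ) 1))⁻¹ • volume.restrict (Set.Icc (-1:ℝ) 1) := hX
  rw [hXlaw, hIcc0, integral_smul_measure]
  have htoReal : ((ENNReal.ofReal 2)⁻¹).toReal = 1 / 2 := by
    rw [ENNReal.toReal_inv, ENNReal.toReal_ofReal (by norm_num : (0:ℝ) ≤ 2)]
    norm_num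
  rw [htoReal]
  have hset : (∫ x in Set.Icc (-1:ℝ) 1, (1 / 2 + Real.exp (-(x * c) ^ 2) / 2))
      = ∫ x in (-1:ℝ)..1, (1 / 2 + Real.exp (-(x * c) ^ 2) / 2) := by
    rw [MeasureTheory.integral_Icc_eq_integral_Ioc,
      intervalIntegral.integral_of_le (by norm_num : (-1:ℝ) ≤ 1)]
  rw [hset]
  -- interval integral computation
  have hi1 : IntervalIntegrable (fun _ : ℝ => (1:ℝ)/2) volume (-1) 1 := intervalIntegrable_const
  have hi2 : IntervalIntegrable (fun x : ℝ => Real.exp (-(x * c) ^ 2) / 2) volume (-1) 1 :=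
    (by fun_prop : Continuous fun x : ℝ => Real.exp (-(x * c) ^ 2) / 2).intervalIntegrable (-1) 1
  have hie : ∀ a b : ℝ, IntervalIntegrable (fun t : ℝ => Real.exp (-t ^ 2)) volume a b :=
    fun a b => (by fun_prop : Continuous fun t : ℝ => Real.exp (-t ^ 2)).intervalIntegrable a b
  have hsym : (∫ t in (-c:ℝ)..0, Real.exp (-t ^ 2)) = ∫ t in (0:ℝ)..c, Real.exp (-t ^ 2) := by
    have h := intervalIntegral.integral_comp_neg (a := (0:ℝ)) (b := c)
      (fun t : ℝ => Real.exp (-t ^ 2))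
    simpa [neg_sq] using h.symm
  have hsplit : (∫ t in (-c:ℝ)..c, Real.exp (-t ^ 2))
      = 2 * ∫ t in (0:ℝ)..c, Real.exp (-t ^ 2) := by
    rw [← intervalIntegral.integral_add_adjacent_intervals (hie (-c) 0) (hie 0 c), hsym]
    ring
  have hJ : (∫ x in (-1:ℝ)..1, Real.exp (-(x * c) ^ 2))
      = c⁻¹ * (2 * ∫ t in (0:ℝ)..c, Real.exp (-t ^ 2)) := by
    have h := intervalIntegral.integral_comp_mul_right (a := (-1:ℝ)) (b := 1)
      (fun t : ℝ => Real.exp (-t ^ 2)) hc_pos.ne'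
    rw [h]
    norm_num [hsplit]
  have hJval : (∫ t in (0:ℝ)..c, Real.exp (-t ^ 2)) = Real.sqrt π * erf c / 2 := by
    rw [erf]
    have : Real.sqrt π ≠ 0 := by positivity
    field_simp
  rw [intervalIntegral.integral_add hi1 hi2, intervalIntegral.integral_const,
    intervalIntegral.integral_div, hJ, hJval]
  have hs2 : Real.sqrt (2 * π) = Real.sqrt 2 * Real.sqrt π := Real.sqrt_mul (by norm_num) π
  have hππ : Real.sqrt π * Real.sqrt π = π := Real.mul_self_sqrt Real.pi_pos.le
  have h22 : Real.sqrt 2 * Real.sqrt 2 = 2 := Real.mul_self_sqrt (by norm_num)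
  have hs2ne : Real.sqrt 2 ≠ 0 := by positivity
  have hsπne : Real.sqrt π ≠ 0 := by positivity
  have hπne : π ≠ 0 := Real.pi_ne_zero
  rw [smul_eq_mul, hc_def, hs2]
  field_simp
  ring_nf
  rw [Real.sq_sqrt Real.pi_pos.le]
end

section
/- Let m > 0, let X be a random variable uniformly distributed on [-1,1], and let W be an independent Gaussian random variable with mean 0 and variance m². Then the variance of cos(π W X) equals 1/2 + erf(√2 m π)/(4 √(2π) m) − ( erf(m π/√2) / (m √(2π)) )², where erf denotes the Gauss error function. -/
open Real MeasureTheory ProbabilityTheory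

section aux

open Complex

lemma gauss_cos (b t : ℝ) (hb : 0 < b) :
    ∫ x : ℝ, Real.cos (t * x) * Real.exp (-b * x ^ 2)
      = Real.sqrt (π / b) * Real.exp (-t ^ 2 / (4 * b)) := by
  have hbc : (0:ℝ) < (b:ℂ).re := by simpa using hb
  have h := fourierIntegral_gaussian hbc (t : ℂ)
  have hint : Integrable (fun x : ℝ => cexp (I * t * x) * cexp (-(b:ℂ) * x ^ 2)) := by
    have h0 := integrable_cexp_quadratic hbc (I * t) 0
    refine (h0.congr ?_)
    filter_upwards with x
    rw [← Complex.exp_add]; ring_nf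
  have hre : ∫ x : ℝ, Complex.re (cexp (I * t * x) * cexp (-(b:ℂ) * x ^ 2))
      = (((π : ℂ) / b) ^ (1 / 2 : ℂ) * cexp (-(t:ℂ) ^ 2 / (4 * b))).re := by
    rw [show (fun x : ℝ => Complex.re (cexp (I * t * x) * cexp (-(b:ℂ) * x ^ 2)))
        = fun x : ℝ => RCLike.re (cexp (I * t * x) * cexp (-(b:ℂ) * x ^ 2)) from rfl,
      _root_.integral_re hint, h]
    rfl
  have hL : ∀ x : ℝ, (cexp (I * t * x) * cexp (-(b:ℂ) * x ^ 2)).re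
      = Real.cos (t * x) * Real.exp (-b * x ^ 2) := by
    intro x
    have h1 : cexp (-(b:ℂ) * x ^ 2) = ((Real.exp (-b * x ^ 2) : ℝ) : ℂ) := by
      rw [Complex.ofReal_exp]; push_cast; ring_nf
    have h2 : I * (t:ℂ) * x = ((t * x : ℝ) : ℂ) * I := by push_cast; ring
    rw [h1, h2, Complex.mul_re, Complex.ofReal_re, Complex.ofReal_im, mul_zero, sub_zero,
      Complex.exp_ofReal_mul_I_re]
  have hR : (((π : ℂ) / b) ^ (1 / 2 : ℂ) * cexp (-(t:ℂ) ^ 2 / (4 * b))).re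
      = Real.sqrt (π / b) * Real.exp (-t ^ 2 / (4 * b)) := by
    have h1 : ((π : ℂ) / b) ^ (1 / 2 : ℂ) = ((Real.sqrt (π / b) : ℝ) : ℂ) := by
      rw [show ((π : ℂ) / b) = (((π / b : ℝ)) : ℂ) by push_cast; ring,
        show ((1/2 : ℂ)) = (((1/2 : ℝ)) : ℂ) by push_cast; ring,
        ← Complex.ofReal_cpow (by positivity)]
      rw [Real.rpow_def_of_pos (by positivity), Real.sqrt_eq_rpow,
        Real.rpow_def_of_pos (by positivity)]
    have h2 : cexp (-(t:ℂ) ^ 2 / (4 * b)) = ((Real.exp (-t ^ 2 / (4 * b)) : ℝ) : ℂ) := by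
      rw [Complex.ofReal_exp]; push_cast; ring_nf
    rw [h1, h2, ← Complex.ofReal_mul, Complex.ofReal_re]
  rw [hR] at hre
  rw [← hre]
  exact integral_congr_ae (Filter.Eventually.of_forall fun x => (hL x).symm)

open ProbabilityTheory in
lemma gauss_cos_meas (m s : ℝ) (hm : 0 < m) :
    ∫ w, Real.cos (s * w) ∂(gaussianReal 0 ⟨m ^ 2, sq_nonneg m⟩)
      = Real.exp (-s ^ 2 * m ^ 2 / 2) := by
  have hv : (⟨m ^ 2, sq_nonneg m⟩ : NNReal) ≠ 0 := by
    simp [← NNReal.coe_ne_zero]; positivity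
  rw [gaussianReal_of_var_ne_zero _ hv]
  have hpdf : gaussianPDF 0 ⟨m ^ 2, sq_nonneg m⟩
      = fun x => ((gaussianPDFReal 0 ⟨m ^ 2, sq_nonneg m⟩ x).toNNReal : ENNReal) := by
    funext x; rfl
  rw [hpdf, integral_withDensity_eq_integral_smul
    ((measurable_gaussianPDFReal 0 ⟨m ^ 2, sq_nonneg m⟩).real_toNNReal)]
  have hb : (0:ℝ) < 1 / (2 * m ^ 2) := by positivity
  have key := gauss_cos (1 / (2 * m ^ 2)) s hb
  calc ∫ x : ℝ, (gaussianPDFReal 0 ⟨m ^ 2, sq_nonneg m⟩ x).toNNReal • Real.cos (s * x)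
      = ∫ x : ℝ, (Real.sqrt (2 * π * m ^ 2))⁻¹ *
          (Real.cos (s * x) * Real.exp (-(1 / (2 * m ^ 2)) * x ^ 2)) := by
        refine integral_congr_ae (Filter.Eventually.of_forall fun x => ?_)
        show (gaussianPDFReal 0 ⟨m ^ 2, sq_nonneg m⟩ x).toNNReal • Real.cos (s * x) = _
        rw [NNReal.smul_def, smul_eq_mul,
          Real.coe_toNNReal _ (gaussianPDFReal_nonneg 0 ⟨m ^ 2, sq_nonneg m⟩ x)]
        unfold gaussianPDFReal
        push_cast
        rw [mul_comm]
        ring_nf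
        erw [NNReal.coe_mk]
        ring_nf
    _ = (Real.sqrt (2 * π * m ^ 2))⁻¹ *
          ∫ x : ℝ, Real.cos (s * x) * Real.exp (-(1 / (2 * m ^ 2)) * x ^ 2) := by
        rw [integral_const_mul]
    _ = Real.exp (-s ^ 2 * m ^ 2 / 2) := by
        rw [key]
        rw [show π / (1 / (2 * m ^ 2)) = 2 * π * m ^ 2 by field_simp]
        rw [show -s ^ 2 / (4 * (1 / (2 * m ^ 2))) = -s ^ 2 * m ^ 2 / 2 by field_simp; ring]
        rw [← mul_assoc, inv_mul_cancel₀ (by positivity), one_mul]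

lemma interval_to_erf (a : ℝ) (ha : 0 < a) :
    ∫ x in (-1:ℝ)..1, Real.exp (-a * x ^ 2)
      = Real.sqrt π / Real.sqrt a * erf (Real.sqrt a) := by
  have hcon : Continuous fun x : ℝ => Real.exp (-a * x ^ 2) := by fun_prop
  have h1 : ∫ x in (-1:ℝ)..(0:ℝ), Real.exp (-a * x ^ 2)
      = ∫ x in (0:ℝ)..1, Real.exp (-a * x ^ 2) := by
    have := intervalIntegral.integral_comp_neg (a := 0) (b := 1)
      (fun x => Real.exp (-a * x ^ 2))
    norm_num at this
    rw [show (fun x : ℝ => Real.exp (-a * x ^ 2)) = fun x : ℝ => Real.exp (-(a * x ^ 2)) by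
      funext x; ring_nf]
    exact this.symm
  have hsplit : ∫ x in (-1:ℝ)..1, Real.exp (-a * x ^ 2)
      = 2 * ∫ x in (0:ℝ)..1, Real.exp (-a * x ^ 2) := by
    rw [← intervalIntegral.integral_add_adjacent_intervals (a := (-1:ℝ)) (b := 0) (c := 1)
      (hcon.intervalIntegrable _ _) (hcon.intervalIntegrable _ _), h1]
    ring
  have hsa : Real.sqrt a ≠ 0 := by positivity
  have hsub := intervalIntegral.integral_comp_mul_right
    (a := (0:ℝ)) (b := 1) (fun t => Real.exp (-t ^ 2)) hsa
  have h2 : ∫ x in (0:ℝ)..1, Real.exp (-a * x ^ 2)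
      = (Real.sqrt a)⁻¹ * ∫ t in (0:ℝ)..(Real.sqrt a), Real.exp (-t ^ 2) := by
    rw [show ∫ x in (0:ℝ)..1, Real.exp (-a * x ^ 2)
        = ∫ x in (0:ℝ)..1, Real.exp (-(x * Real.sqrt a) ^ 2) from
      intervalIntegral.integral_congr fun x _ => by
        rw [mul_pow, Real.sq_sqrt ha.le]; ring_nf]
    rw [hsub]; norm_num
  rw [hsplit, h2, erf]
  have hπ : Real.sqrt π ≠ 0 := by positivity
  field_simp

end aux

/-- If `X` is uniform on `[-1,1]`, `W` is Gaussian `N(0, m²)` with `m > 0`, and `X`, `W` are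
independent, then `Var(cos(π W X)) = 1/2 + erf(√2 m π)/(4 √(2π) m) − (erf(mπ/√2)/(m√(2π)))²`. -/
theorem variance_cos_hidden_node
    {Ω : Type*} [MeasureSpace Ω] [IsProbabilityMeasure (ℙ : Measure Ω)]
    (m : ℝ) (hm : 0 < m) (X W : Ω → ℝ)
    (hX : MeasureTheory.pdf.IsUniform X (Set.Icc (-1:ℝ) 1) ℙ)
    (hW : Measure.map W ℙ = gaussianReal 0 ⟨m ^ 2, sq_nonneg m⟩)
    (hindep : IndepFun X W ℙ) :
    variance (fun ω => Real.cos (π * W ω * X ω)) ℙ =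
      1 / 2 + erf (Real.sqrt 2 * m * π) / (4 * Real.sqrt (2 * π) * m) -
        (erf (m * π / Real.sqrt 2) / (m * Real.sqrt (2 * π))) ^ 2 := by
  have hvol : volume (Set.Icc (-1:ℝ) 1) = ENNReal.ofReal 2 := by
    rw [Real.volume_Icc]; norm_num
  have hXm : AEMeasurable X ℙ := hX.aemeasurable (by rw [hvol]; norm_num) (by rw [hvol]; norm_num)
  have hWm : AEMeasurable W ℙ := by
    by_contra h
    rw [Measure.map_of_not_aemeasurable h] at hW
    exact (@IsProbabilityMeasure.ne_zero _ _ (gaussianReal 0 ⟨m ^ 2, sq_nonneg m⟩)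
      (instIsProbabilityMeasureGaussianReal 0 _)) hW.symm
  have hmap : Measure.map (fun ω => (X ω, W ω)) ℙ = (Measure.map X ℙ).prod (Measure.map W ℙ) :=
    (indepFun_iff_map_prod_eq_prod_map_map hXm hWm).mp hindep
  have hPX : IsProbabilityMeasure (Measure.map X ℙ) := Measure.isProbabilityMeasure_map hXm
  have hPW : IsProbabilityMeasure (Measure.map W ℙ) := Measure.isProbabilityMeasure_map hWm
  -- the key integral computation
  have hG : ∀ c : ℝ, 0 < c → ∫ ω, Real.cos (c * (W ω * X ω)) ∂ℙ
      = (1/2) * (Real.sqrt π / Real.sqrt (c ^ 2 * m ^ 2 / 2) *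
          erf (Real.sqrt (c ^ 2 * m ^ 2 / 2))) := by
    intro c hc
    have hcont : Continuous fun p : ℝ × ℝ => Real.cos (c * (p.2 * p.1)) := by fun_prop
    have hint : Integrable (fun p : ℝ × ℝ => Real.cos (c * (p.2 * p.1)))
        ((Measure.map X ℙ).prod (Measure.map W ℙ)) := by
      refine Integrable.mono' (integrable_const 1) hcont.aestronglyMeasurable ?_
      filter_upwards with p
      simpa using Real.abs_cos_le_one _
    have step1 : ∫ ω, Real.cos (c * (W ω * X ω)) ∂ℙ
        = ∫ p : ℝ × ℝ, Real.cos (c * (p.2 * p.1))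
            ∂((Measure.map X ℙ).prod (Measure.map W ℙ)) := by
      rw [← hmap, integral_map (hXm.prodMk hWm) hcont.aestronglyMeasurable]
    have step2 : ∫ p : ℝ × ℝ, Real.cos (c * (p.2 * p.1))
          ∂((Measure.map X ℙ).prod (Measure.map W ℙ))
        = ∫ x, (∫ w, Real.cos (c * (w * x)) ∂(Measure.map W ℙ)) ∂(Measure.map X ℙ) :=
      MeasureTheory.integral_prod _ hint
    have step3 : ∀ x : ℝ, ∫ w, Real.cos (c * (w * x)) ∂(Measure.map W ℙ)
        = Real.exp (-(c ^ 2 * m ^ 2 / 2) * x ^ 2) := by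
      intro x
      rw [hW, show (fun w => Real.cos (c * (w * x))) = fun w => Real.cos ((c * x) * w) by
        funext w; ring_nf, gauss_cos_meas m (c * x) hm]
      ring_nf
    have hXmap : Measure.map X ℙ
        = (volume (Set.Icc (-1:ℝ) 1))⁻¹ • volume.restrict (Set.Icc (-1:ℝ) 1) := hX
    have step4 : ∫ x, Real.exp (-(c ^ 2 * m ^ 2 / 2) * x ^ 2) ∂(Measure.map X ℙ)
        = (1/2) * ∫ x in (-1:ℝ)..1, Real.exp (-(c ^ 2 * m ^ 2 / 2) * x ^ 2) := by
      rw [hXmap, integral_smul_measure, hvol,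
        intervalIntegral.integral_of_le (by norm_num : (-1:ℝ) ≤ 1),
        ← integral_Icc_eq_integral_Ioc]
      rw [ENNReal.toReal_inv, ENNReal.toReal_ofReal (by norm_num)]
      norm_num
    rw [step1, step2, integral_congr_ae (Filter.Eventually.of_forall step3), step4,
      interval_to_erf _ (by positivity)]
  -- measurability and boundedness of the random variable
  have hfm : AEStronglyMeasurable (fun ω => Real.cos (π * W ω * X ω)) ℙ :=
    (Real.measurable_cos.comp_aemeasurable
      ((aemeasurable_const.mul hWm).mul hXm)).aestronglyMeasurable
  have hmem : MemLp (fun ω => Real.cos (π * W ω * X ω)) 2 ℙ :=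
    memLp_of_bounded (by
      filter_upwards with ω
      exact ⟨Real.neg_one_le_cos _, Real.cos_le_one _⟩) hfm 2
  rw [variance_eq_sub hmem]
  -- sqrt facts
  have h2 : Real.sqrt 2 * Real.sqrt 2 = 2 := Real.mul_self_sqrt (by norm_num)
  have hpi : Real.sqrt π * Real.sqrt π = π := Real.mul_self_sqrt Real.pi_pos.le
  have h2pi : Real.sqrt (2 * π) = Real.sqrt 2 * Real.sqrt π := Real.sqrt_mul (by norm_num) π
  have hs1 : Real.sqrt (π ^ 2 * m ^ 2 / 2) = m * π / Real.sqrt 2 := by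
    rw [show π ^ 2 * m ^ 2 / 2 = (m * π / Real.sqrt 2) ^ 2 by
      rw [div_pow, Real.sq_sqrt (by norm_num : (0:ℝ) ≤ 2)]; ring,
      Real.sqrt_sq (by positivity)]
  have hs2 : Real.sqrt ((2 * π) ^ 2 * m ^ 2 / 2) = Real.sqrt 2 * m * π := by
    rw [show (2 * π) ^ 2 * m ^ 2 / 2 = (Real.sqrt 2 * m * π) ^ 2 from by
      linear_combination (-(m ^ 2 * π ^ 2)) * h2,
      Real.sqrt_sq (by positivity)]
  -- the mean
  have hEf : ∫ ω, Real.cos (π * W ω * X ω) ∂ℙ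
      = erf (m * π / Real.sqrt 2) / (m * Real.sqrt (2 * π)) := by
    have h := hG π Real.pi_pos
    rw [show (fun ω => Real.cos (π * (W ω * X ω))) = fun ω => Real.cos (π * W ω * X ω) by
      funext ω; ring_nf] at h
    rw [h, hs1, h2pi]
    have hsπ : Real.sqrt π ≠ 0 := by positivity
    have hs2' : Real.sqrt 2 ≠ 0 := by positivity
    field_simp
    linear_combination erf (m * π / Real.sqrt 2) * (Real.sqrt 2 * Real.sqrt 2) * hpi + erf (m * π / Real.sqrt 2) * π * h2
  -- the second moment
  have hEf2 : ∫ ω, (Real.cos (π * W ω * X ω)) ^ 2 ∂ℙ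
      = 1 / 2 + erf (Real.sqrt 2 * m * π) / (4 * Real.sqrt (2 * π) * m) := by
    have hptw : ∀ ω, (Real.cos (π * W ω * X ω)) ^ 2
        = 1 / 2 + Real.cos ((2 * π) * (W ω * X ω)) / 2 := by
      intro ω
      rw [Real.cos_sq]
      congr 2
      ring
    have hint2 : Integrable (fun ω => Real.cos ((2 * π) * (W ω * X ω)) / 2) ℙ := by
      refine Integrable.div_const ?_ 2
      refine Integrable.mono' (integrable_const 1) ?_ ?_
      · exact (Real.measurable_cos.comp_aemeasurable
          (aemeasurable_const.mul (hWm.mul hXm))).aestronglyMeasurable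
      · filter_upwards with ω; simpa using Real.abs_cos_le_one _
    rw [integral_congr_ae (Filter.Eventually.of_forall hptw),
      integral_add (integrable_const _) hint2, integral_const]
    simp only [measure_univ, probReal_univ, ENNReal.toReal_one, smul_eq_mul, one_mul]
    rw [integral_div, hG (2 * π) (by positivity), hs2, h2pi]
    have hsπ : Real.sqrt π ≠ 0 := by positivity
    have hs2' : Real.sqrt 2 ≠ 0 := by positivity
    have hπ : π ≠ 0 := Real.pi_ne_zero
    field_simp
    linear_combination 4 * erf (Real.sqrt 2 * m * π) * hpi
  calc ℙ[(fun ω => Real.cos (π * W ω * X ω)) ^ 2] - (ℙ[fun ω => Real.cos (π * W ω * X ω)]) ^ 2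
      = (∫ ω, (Real.cos (π * W ω * X ω)) ^ 2 ∂ℙ)
        - (∫ ω, Real.cos (π * W ω * X ω) ∂ℙ) ^ 2 := by rfl
    _ = _ := by rw [hEf, hEf2]
end

section
/- There exists a unique m > 0 such that 1/3 = 1/2 + erf(√2 m π)/(4 √(2π) m) − ( erf(m π/√2) / (m √(2π)) )², and this solution satisfies 0.69 < m < 0.70. -/
open Real

noncomputable def S (n : ℕ) (y : ℝ) : ℝ :=
  ∑ k ∈ Finset.range (n + 1), (-1 : ℝ) ^ k / (Nat.factorial k) * y ^ k

lemma S_cont (n : ℕ) : Continuous (S n) := by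
  unfold S
  exact continuous_finset_sum _ fun k _ => (continuous_const.mul (continuous_pow k))

lemma integral_S (n : ℕ) (y : ℝ) :
    ∫ t in (0:ℝ)..y, S n t = 1 - S (n + 1) y := by
  unfold S
  rw [intervalIntegral.integral_finset_sum (f := fun k (t : ℝ) => (-1:ℝ)^k / (Nat.factorial k) * t ^ k) (fun k _ =>
    ((continuous_const.mul (continuous_pow k)).intervalIntegrable 0 y))]
  have h : ∀ k ∈ Finset.range (n+1),
      (∫ t in (0:ℝ)..y, (-1:ℝ)^k / (Nat.factorial k) * t ^ k)
      = (-1:ℝ)^k / (Nat.factorial k) * (y ^ (k+1) / (k+1)) := by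
    intro k _
    rw [intervalIntegral.integral_const_mul, integral_pow]
    norm_num
  rw [Finset.sum_congr rfl h]
  rw [Finset.sum_range_succ' (fun k => (-1:ℝ)^k / (Nat.factorial k) * y ^ k) (n+1)]
  simp only [Nat.factorial_succ, pow_succ]
  push_cast
  have h2 : ∀ k ∈ Finset.range (n+1),
      ((-1:ℝ)^k * -1 / (((k:ℝ) + 1) * (Nat.factorial k)) * (y ^ k * y))
      = -((-1:ℝ)^k / (Nat.factorial k) * (y ^ k * y / ((k:ℝ)+1))) := by
    intro k _
    rw [div_eq_mul_inv, mul_inv]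
    ring
  rw [Finset.sum_congr rfl h2, Finset.sum_neg_distrib]
  norm_num

lemma exp_neg_vs_S (n : ℕ) : ∀ y : ℝ, 0 ≤ y →
    (Even n → Real.exp (-y) ≤ S n y) ∧ (Odd n → S n y ≤ Real.exp (-y)) := by
  induction n with
  | zero =>
    intro y hy
    constructor
    · intro _
      have h0 : S 0 y = 1 := by unfold S; simp
      rw [h0]
      exact Real.exp_le_one_iff.mpr (by linarith)
    · intro h
      exact absurd h (by decide)
  | succ n ih =>
    intro y hy
    have hc : Continuous fun t : ℝ => Real.exp (-t) := by continuity
    have hint1 : IntervalIntegrable (S n) MeasureTheory.volume 0 y :=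
      (S_cont n).intervalIntegrable 0 y
    have hint2 : IntervalIntegrable (fun t => Real.exp (-t)) MeasureTheory.volume 0 y :=
      hc.intervalIntegrable 0 y
    have hexp : ∫ t in (0:ℝ)..y, Real.exp (-t) = 1 - Real.exp (-y) := by
      rw [intervalIntegral.integral_comp_neg (fun t => Real.exp t), integral_exp]
      simp
    have key1 : Real.exp (-y) - S (n+1) y = ∫ t in (0:ℝ)..y, (S n t - Real.exp (-t)) := by
      rw [intervalIntegral.integral_sub hint1 hint2, integral_S, hexp]; ring
    have key2 : S (n+1) y - Real.exp (-y) = ∫ t in (0:ℝ)..y, (Real.exp (-t) - S n t) := by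
      rw [intervalIntegral.integral_sub hint2 hint1, integral_S, hexp]; ring
    constructor
    · intro hev
      have hodd : Odd n := by
        rcases Nat.even_or_odd n with h | h
        · exact absurd hev (by simp [Nat.even_add_one, Nat.not_even_iff_odd, h.add_one ]at *; exact h)
        · exact h
      have : 0 ≤ S (n+1) y - Real.exp (-y) := by
        rw [key2]
        apply intervalIntegral.integral_nonneg hy
        intro t ht
        have := (ih t ht.1).2 hodd
        linarith
      linarith
    · intro hodd
      have hev : Even n := by
        rcases Nat.even_or_odd n with h | h
        · exact h
        · exact absurd hodd (by simp [Nat.not_odd_iff_even]; exact h.add_one)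
      have : 0 ≤ Real.exp (-y) - S (n+1) y := by
        rw [key1]
        apply intervalIntegral.integral_nonneg hy
        intro t ht
        have := (ih t ht.1).1 hev
        linarith
      linarith

noncomputable def Iexp (u : ℝ) : ℝ := ∫ x in (0:ℝ)..1, Real.exp (-(u * x ^ 2))
noncomputable def Ix2 (u : ℝ) : ℝ := ∫ x in (0:ℝ)..1, x ^ 2 * Real.exp (-(u * x ^ 2))

noncomputable def T1 (n : ℕ) (u : ℝ) : ℝ :=
  ∑ k ∈ Finset.range (n + 1), (-1 : ℝ) ^ k / (Nat.factorial k) * u ^ k / (2 * k + 1)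
noncomputable def T2 (n : ℕ) (u : ℝ) : ℝ :=
  ∑ k ∈ Finset.range (n + 1), (-1 : ℝ) ^ k / (Nat.factorial k) * u ^ k / (2 * k + 3)

lemma cont_exp_sq (u : ℝ) : Continuous fun x : ℝ => Real.exp (-(u * x ^ 2)) := by
  continuity

lemma cont_S_sq (n : ℕ) (u : ℝ) : Continuous fun x : ℝ => S n (u * x ^ 2) := by
  exact (S_cont n).comp (by continuity)

lemma integral_S_sq (n : ℕ) (u : ℝ) :
    ∫ x in (0:ℝ)..1, S n (u * x ^ 2) = T1 n u := by
  unfold S T1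
  rw [intervalIntegral.integral_finset_sum (μ := MeasureTheory.volume)
    (f := fun k (x : ℝ) => (-1:ℝ)^k / (Nat.factorial k) * (u * x ^ 2) ^ k)
    (fun k _ => (by continuity : Continuous fun x : ℝ => (-1:ℝ)^k / (Nat.factorial k) * (u * x ^ 2) ^ k).intervalIntegrable 0 1)]
  apply Finset.sum_congr rfl
  intro k _
  have hfun : (fun x : ℝ => (-1:ℝ)^k / (Nat.factorial k) * (u * x ^ 2) ^ k)
      = fun x : ℝ => ((-1:ℝ)^k / (Nat.factorial k) * u ^ k) * x ^ (2 * k) := by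
    funext x
    rw [mul_pow, ← pow_mul]
    ring
  rw [show (∫ x in (0:ℝ)..1, (-1:ℝ)^k / (Nat.factorial k) * (u * x ^ 2) ^ k)
      = ∫ x in (0:ℝ)..1, ((-1:ℝ)^k / (Nat.factorial k) * u ^ k) * x ^ (2 * k) from by rw [hfun]]
  rw [intervalIntegral.integral_const_mul, integral_pow]
  push_cast
  ring

lemma integral_x2_S_sq (n : ℕ) (u : ℝ) :
    ∫ x in (0:ℝ)..1, x ^ 2 * S n (u * x ^ 2) = T2 n u := by
  unfold S T2
  rw [show (fun x : ℝ => x ^ 2 * ∑ k ∈ Finset.range (n + 1), (-1 : ℝ) ^ k / (Nat.factorial k) * (u * x ^ 2) ^ k)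
      = fun x : ℝ => ∑ k ∈ Finset.range (n + 1), (-1 : ℝ) ^ k / (Nat.factorial k) * (u * x ^ 2) ^ k * x ^ 2 from by
    funext x; rw [Finset.mul_sum]; apply Finset.sum_congr rfl; intro k _; ring]
  rw [intervalIntegral.integral_finset_sum (μ := MeasureTheory.volume)
    (f := fun k (x : ℝ) => (-1:ℝ)^k / (Nat.factorial k) * (u * x ^ 2) ^ k * x ^ 2)
    (fun k _ => (by continuity : Continuous fun x : ℝ => (-1:ℝ)^k / (Nat.factorial k) * (u * x ^ 2) ^ k * x ^ 2).intervalIntegrable 0 1)]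
  apply Finset.sum_congr rfl
  intro k _
  have hfun : (fun x : ℝ => (-1:ℝ)^k / (Nat.factorial k) * (u * x ^ 2) ^ k * x ^ 2)
      = fun x : ℝ => ((-1:ℝ)^k / (Nat.factorial k) * u ^ k) * x ^ (2 * k + 2) := by
    funext x
    rw [mul_pow, ← pow_mul, pow_add]
    ring
  rw [show (∫ x in (0:ℝ)..1, (-1:ℝ)^k / (Nat.factorial k) * (u * x ^ 2) ^ k * x ^ 2)
      = ∫ x in (0:ℝ)..1, ((-1:ℝ)^k / (Nat.factorial k) * u ^ k) * x ^ (2 * k + 2) from by rw [hfun]]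
  rw [intervalIntegral.integral_const_mul, integral_pow]
  push_cast
  ring

lemma Iexp_le_T1 (n : ℕ) (hn : Even n) (u : ℝ) (hu : 0 ≤ u) : Iexp u ≤ T1 n u := by
  unfold Iexp
  rw [← integral_S_sq]
  apply intervalIntegral.integral_mono_on (by norm_num)
    ((cont_exp_sq u).intervalIntegrable 0 1) ((cont_S_sq n u).intervalIntegrable 0 1)
  intro x _
  exact (exp_neg_vs_S n (u * x ^ 2) (mul_nonneg hu (sq_nonneg x))).1 hn

lemma T1_le_Iexp (n : ℕ) (hn : Odd n) (u : ℝ) (hu : 0 ≤ u) : T1 n u ≤ Iexp u := by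
  unfold Iexp
  rw [← integral_S_sq]
  apply intervalIntegral.integral_mono_on (by norm_num)
    ((cont_S_sq n u).intervalIntegrable 0 1) ((cont_exp_sq u).intervalIntegrable 0 1)
  intro x _
  exact (exp_neg_vs_S n (u * x ^ 2) (mul_nonneg hu (sq_nonneg x))).2 hn

lemma Ix2_le_T2 (n : ℕ) (hn : Even n) (u : ℝ) (hu : 0 ≤ u) : Ix2 u ≤ T2 n u := by
  unfold Ix2
  rw [← integral_x2_S_sq]
  apply intervalIntegral.integral_mono_on (by norm_num)
    (((continuous_pow 2).mul (cont_exp_sq u)).intervalIntegrable 0 1)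
    (((continuous_pow 2).mul (cont_S_sq n u)).intervalIntegrable 0 1)
  intro x _
  exact mul_le_mul_of_nonneg_left
    ((exp_neg_vs_S n (u * x ^ 2) (mul_nonneg hu (sq_nonneg x))).1 hn) (sq_nonneg x)

lemma T2_le_Ix2 (n : ℕ) (hn : Odd n) (u : ℝ) (hu : 0 ≤ u) : T2 n u ≤ Ix2 u := by
  unfold Ix2
  rw [← integral_x2_S_sq]
  apply intervalIntegral.integral_mono_on (by norm_num)
    (((continuous_pow 2).mul (cont_S_sq n u)).intervalIntegrable 0 1)
    (((continuous_pow 2).mul (cont_exp_sq u)).intervalIntegrable 0 1)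
  intro x _
  exact mul_le_mul_of_nonneg_left
    ((exp_neg_vs_S n (u * x ^ 2) (mul_nonneg hu (sq_nonneg x))).2 hn) (sq_nonneg x)

lemma Iexp_nonneg (u : ℝ) : 0 ≤ Iexp u :=
  intervalIntegral.integral_nonneg (by norm_num) (fun x _ => (Real.exp_pos _).le)

lemma Iexp_le_one (u : ℝ) (hu : 0 ≤ u) : Iexp u ≤ 1 := by
  have h : Iexp u ≤ ∫ _ in (0:ℝ)..1, (1:ℝ) := by
    apply intervalIntegral.integral_mono_on (by norm_num)
      ((cont_exp_sq u).intervalIntegrable 0 1) (continuous_const.intervalIntegrable 0 1)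
    intro x _
    exact Real.exp_le_one_iff.mpr (by nlinarith [sq_nonneg x])
  simpa using h

lemma Ix2_nonneg (u : ℝ) : 0 ≤ Ix2 u :=
  intervalIntegral.integral_nonneg (by norm_num)
    (fun x _ => mul_nonneg (sq_nonneg x) (Real.exp_pos _).le)

lemma Iexp_anti {p q : ℝ} (hpq : p ≤ q) : Iexp q ≤ Iexp p := by
  apply intervalIntegral.integral_mono_on (by norm_num)
    ((cont_exp_sq q).intervalIntegrable 0 1) ((cont_exp_sq p).intervalIntegrable 0 1)
  intro x _
  exact Real.exp_le_exp.mpr (by nlinarith [sq_nonneg x])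

lemma Ix2_anti {p q : ℝ} (hpq : p ≤ q) : Ix2 q ≤ Ix2 p := by
  apply intervalIntegral.integral_mono_on (by norm_num)
    (((continuous_pow 2).mul (cont_exp_sq q)).intervalIntegrable 0 1)
    (((continuous_pow 2).mul (cont_exp_sq p)).intervalIntegrable 0 1)
  intro x _
  exact mul_le_mul_of_nonneg_left (Real.exp_le_exp.mpr (by nlinarith [sq_nonneg x])) (sq_nonneg x)

lemma Ix2_le_third (u : ℝ) (hu : 0 ≤ u) : Ix2 u ≤ 1 / 3 := by
  have h : Ix2 u ≤ ∫ x in (0:ℝ)..1, x ^ 2 := by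
    apply intervalIntegral.integral_mono_on (by norm_num)
      (((continuous_pow 2).mul (cont_exp_sq u)).intervalIntegrable 0 1)
      ((continuous_pow 2).intervalIntegrable 0 1)
    intro x _
    simp only [Pi.mul_apply, Pi.sub_apply]
    nlinarith [Real.exp_le_one_iff.mpr (show -(u * x^2) ≤ 0 by nlinarith [sq_nonneg x]), sq_nonneg x, Real.exp_pos (-(u*x^2))]
  rw [integral_pow] at h
  norm_num at h
  exact h

lemma diff_lb {p q : ℝ} (hpq : p ≤ q) : (q - p) * Ix2 q ≤ Iexp p - Iexp q := by
  unfold Iexp Ix2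
  rw [← intervalIntegral.integral_sub ((cont_exp_sq p).intervalIntegrable 0 1)
    ((cont_exp_sq q).intervalIntegrable 0 1), ← intervalIntegral.integral_const_mul]
  apply intervalIntegral.integral_mono_on (by norm_num)
    ((continuous_const.mul ((continuous_pow 2).mul (cont_exp_sq q))).intervalIntegrable 0 1)
    (((cont_exp_sq p).sub (cont_exp_sq q)).intervalIntegrable 0 1)
  intro x _
  have h1 : Real.exp (-(p * x ^ 2)) = Real.exp ((q - p) * x ^ 2) * Real.exp (-(q * x ^ 2)) := by
    rw [← Real.exp_add]; ring_nf
  have h2 : (q - p) * x ^ 2 + 1 ≤ Real.exp ((q - p) * x ^ 2) := Real.add_one_le_exp _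
  simp only [Pi.mul_apply, Pi.sub_apply]
  nlinarith [Real.exp_pos (-(q * x ^ 2))]

lemma diff_ub {p q : ℝ} (hpq : p ≤ q) : Iexp p - Iexp q ≤ (q - p) * Ix2 p := by
  unfold Iexp Ix2
  rw [← intervalIntegral.integral_sub ((cont_exp_sq p).intervalIntegrable 0 1)
    ((cont_exp_sq q).intervalIntegrable 0 1), ← intervalIntegral.integral_const_mul]
  apply intervalIntegral.integral_mono_on (by norm_num)
    (((cont_exp_sq p).sub (cont_exp_sq q)).intervalIntegrable 0 1)
    ((continuous_const.mul ((continuous_pow 2).mul (cont_exp_sq p))).intervalIntegrable 0 1)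
  intro x _
  have h1 : Real.exp (-(q * x ^ 2)) = Real.exp (-((q - p) * x ^ 2)) * Real.exp (-(p * x ^ 2)) := by
    rw [← Real.exp_add]; ring_nf
  have h2 : -((q - p) * x ^ 2) + 1 ≤ Real.exp (-((q - p) * x ^ 2)) := Real.add_one_le_exp _
  simp only [Pi.mul_apply, Pi.sub_apply]
  nlinarith [Real.exp_pos (-(p * x ^ 2))]

noncomputable def Phi (u : ℝ) : ℝ := 1 / 6 + Iexp (4 * u) / 2 - (Iexp u) ^ 2

lemma phi_step {p q : ℝ} (hpq : p ≤ q) :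
    Phi p + 2 * (q - p) * (Iexp q * Ix2 q - Ix2 (4 * p)) ≤ Phi q := by
  have h1 : Iexp (4 * p) - Iexp (4 * q) ≤ (4 * q - 4 * p) * Ix2 (4 * p) :=
    diff_ub (by linarith)
  have h2 : (q - p) * Ix2 q ≤ Iexp p - Iexp q := diff_lb hpq
  have h3 : Iexp q ≤ Iexp p := Iexp_anti hpq
  have h4 : 0 ≤ Iexp q := Iexp_nonneg q
  have h5 : 0 ≤ Ix2 q := Ix2_nonneg q
  have e1 : ((q - p) * Ix2 q) * (2 * Iexp q) ≤ (Iexp p - Iexp q) * (Iexp p + Iexp q) := by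
    apply mul_le_mul h2 (by linarith) (by linarith) ?_
    have : 0 ≤ (q - p) * Ix2 q := mul_nonneg (by linarith) h5
    linarith
  unfold Phi
  nlinarith [e1, h1]

lemma phi_diff_bound {p q : ℝ} (hp : 0 ≤ p) (hpq : p ≤ q) : |Phi q - Phi p| ≤ 4 * (q - p) := by
  have h1 : Iexp (4 * p) - Iexp (4 * q) ≤ (4 * q - 4 * p) * Ix2 (4 * p) := diff_ub (by linarith)
  have h1' : 0 ≤ Iexp (4 * p) - Iexp (4 * q) := by
    have := Iexp_anti (show 4 * p ≤ 4 * q by linarith); linarith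
  have hI4 : Ix2 (4 * p) ≤ 1 / 3 := Ix2_le_third _ (by linarith)
  have h2 : Iexp p - Iexp q ≤ (q - p) * Ix2 p := diff_ub hpq
  have h2' : 0 ≤ Iexp p - Iexp q := by have := Iexp_anti hpq; linarith
  have hIp : Ix2 p ≤ 1 / 3 := Ix2_le_third _ hp
  have hle1 : Iexp p ≤ 1 := Iexp_le_one _ hp
  have hq0 : 0 ≤ Iexp q := Iexp_nonneg q
  have e1 : (Iexp p - Iexp q) * (Iexp p + Iexp q) ≤ ((q - p) * (1/3)) * 2 := by
    apply mul_le_mul _ (by linarith) (by linarith) (by nlinarith)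
    calc Iexp p - Iexp q ≤ (q - p) * Ix2 p := h2
    _ ≤ (q - p) * (1/3) := by
        apply mul_le_mul_of_nonneg_left hIp (by linarith)
  have e2 : 0 ≤ (Iexp p - Iexp q) * (Iexp p + Iexp q) := by
    apply mul_nonneg h2' (by linarith)
  unfold Phi
  rw [abs_le]
  constructor <;> nlinarith [h1, h1', hI4, e1, e2]

lemma phi_contOn : ContinuousOn Phi (Set.Icc (2.3495 : ℝ) 2.418) := by
  apply LipschitzOnWith.continuousOn (K := 4)
  rw [lipschitzOnWith_iff_dist_le_mul]
  intro x hx y hy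
  rw [Real.dist_eq, Real.dist_eq]
  rcases le_total x y with h | h
  · have := phi_diff_bound (show (0:ℝ) ≤ x by cases hx; linarith) h
    rw [abs_sub_comm]
    rw [abs_of_nonpos (by cases hx; cases hy; linarith : x - y ≤ 0)]
    push_cast
    linarith [this]
  · have := phi_diff_bound (show (0:ℝ) ≤ y by cases hy; linarith) h
    rw [abs_of_nonneg (by linarith : (0:ℝ) ≤ x - y)]
    push_cast
    linarith [this]

lemma num1 : (0.8556 : ℝ) ≤ Iexp 0.5 := by
  refine le_trans ?_ (T1_le_Iexp 5 ⟨2, rfl⟩ 0.5 (by norm_num))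
  unfold T1
  simp only [Finset.sum_range_succ, Finset.sum_range_zero]
  norm_num [Nat.factorial]

lemma num2u : Iexp 2 ≤ (0.5982 : ℝ) := by
  refine le_trans (Iexp_le_T1 10 ⟨5, rfl⟩ 2 (by norm_num)) ?_
  unfold T1
  simp only [Finset.sum_range_succ, Finset.sum_range_zero]
  norm_num [Nat.factorial]

lemma num2l : (0.7108 : ℝ) ≤ Iexp 1.2 := by
  refine le_trans ?_ (T1_le_Iexp 9 ⟨4, rfl⟩ 1.2 (by norm_num))
  unfold T1
  simp only [Finset.sum_range_succ, Finset.sum_range_zero]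
  norm_num [Nat.factorial]

lemma num3u : Iexp 9.398 ≤ (0.28911 : ℝ) := by
  refine le_trans (Iexp_le_T1 28 ⟨14, rfl⟩ 9.398 (by norm_num)) ?_
  unfold T1
  simp only [Finset.sum_range_succ, Finset.sum_range_zero]
  norm_num [Nat.factorial]

lemma num3l : (0.5607 : ℝ) ≤ Iexp 2.3495 := by
  refine le_trans ?_ (T1_le_Iexp 13 ⟨6, rfl⟩ 2.3495 (by norm_num))
  unfold T1
  simp only [Finset.sum_range_succ, Finset.sum_range_zero]
  norm_num [Nat.factorial]

lemma num4l : (0.28494 : ℝ) ≤ Iexp 9.672 := by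
  refine le_trans ?_ (T1_le_Iexp 29 ⟨14, rfl⟩ 9.672 (by norm_num))
  unfold T1
  simp only [Finset.sum_range_succ, Finset.sum_range_zero]
  norm_num [Nat.factorial]

lemma num4u : Iexp 2.418 ≤ (0.55404 : ℝ) := by
  refine le_trans (Iexp_le_T1 14 ⟨7, rfl⟩ 2.418 (by norm_num)) ?_
  unfold T1
  simp only [Finset.sum_range_succ, Finset.sum_range_zero]
  norm_num [Nat.factorial]

lemma num5b : (0.0961 : ℝ) ≤ Ix2 2.418 := by
  refine le_trans ?_ (T2_le_Ix2 13 ⟨6, rfl⟩ 2.418 (by norm_num))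
  unfold T2
  simp only [Finset.sum_range_succ, Finset.sum_range_zero]
  norm_num [Nat.factorial]

lemma num5c : Ix2 9.398 ≤ (0.0154 : ℝ) := by
  refine le_trans (Ix2_le_T2 28 ⟨14, rfl⟩ 9.398 (by norm_num)) ?_
  unfold T2
  simp only [Finset.sum_range_succ, Finset.sum_range_zero]
  norm_num [Nat.factorial]

lemma num6b : (0.099 : ℝ) ≤ Ix2 2.3495 := by
  refine le_trans ?_ (T2_le_Ix2 13 ⟨6, rfl⟩ 2.3495 (by norm_num))
  unfold T2
  simp only [Finset.sum_range_succ, Finset.sum_range_zero]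
  norm_num [Nat.factorial]

lemma num6c : Ix2 4.8 ≤ (0.0412 : ℝ) := by
  refine le_trans (Ix2_le_T2 20 ⟨10, rfl⟩ 4.8 (by norm_num)) ?_
  unfold T2
  simp only [Finset.sum_range_succ, Finset.sum_range_zero]
  norm_num [Nat.factorial]

lemma num7a : (0.3956 : ℝ) ≤ Iexp 5 := by
  refine le_trans ?_ (T1_le_Iexp 17 ⟨8, rfl⟩ 5 (by norm_num))
  unfold T1
  simp only [Finset.sum_range_succ, Finset.sum_range_zero]
  norm_num [Nat.factorial]

lemma num7b : (0.0388 : ℝ) ≤ Ix2 5 := by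
  refine le_trans ?_ (T2_le_Ix2 17 ⟨8, rfl⟩ 5 (by norm_num))
  unfold T2
  simp only [Finset.sum_range_succ, Finset.sum_range_zero]
  norm_num [Nat.factorial]

lemma num7c : Ix2 9.672 ≤ (0.01474 : ℝ) := by
  refine le_trans (Ix2_le_T2 30 ⟨15, rfl⟩ 9.672 (by norm_num)) ?_
  unfold T2
  simp only [Finset.sum_range_succ, Finset.sum_range_zero]
  norm_num [Nat.factorial]

lemma num8 : Iexp 5 ≤ (0.3958 : ℝ) := by
  refine le_trans (Iexp_le_T1 18 ⟨9, rfl⟩ 5 (by norm_num)) ?_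
  unfold T1
  simp only [Finset.sum_range_succ, Finset.sum_range_zero]
  norm_num [Nat.factorial]

lemma num5a : (0.554 : ℝ) ≤ Iexp 2.418 := by
  refine le_trans ?_ (T1_le_Iexp 13 ⟨6, rfl⟩ 2.418 (by norm_num))
  unfold T1
  simp only [Finset.sum_range_succ, Finset.sum_range_zero]
  norm_num [Nat.factorial]

lemma phi_a_neg : Phi 2.3495 < 0 := by
  unfold Phi
  rw [show (4:ℝ) * 2.3495 = 9.398 by norm_num]
  nlinarith [num3u, num3l, Iexp_nonneg 2.3495]

lemma phi_b_pos : 0 < Phi 2.418 := by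
  unfold Phi
  rw [show (4:ℝ) * 2.418 = 9.672 by norm_num]
  nlinarith [num4l, num4u, Iexp_nonneg 2.418]

lemma phi_neg_left {u : ℝ} (hu0 : 0 < u) (hu : u ≤ 2.3495) : Phi u < 0 := by
  rcases le_total u 0.5 with h | h
  · have h1 : Iexp (4 * u) ≤ 1 := Iexp_le_one _ (by linarith)
    have h2 : (0.8556 : ℝ) ≤ Iexp u := le_trans num1 (Iexp_anti h)
    unfold Phi
    nlinarith
  · rcases le_total u 1.2 with h' | h'
    · have h1 : Iexp (4 * u) ≤ 0.5982 := le_trans (Iexp_anti (by linarith : (2:ℝ) ≤ 4 * u)) num2u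
      have h2 : (0.7108 : ℝ) ≤ Iexp u := le_trans num2l (Iexp_anti h')
      unfold Phi
      nlinarith
    · have hstep := phi_step (p := u) (q := 2.3495) hu
      have hK : Ix2 (4 * u) ≤ 0.0412 :=
        le_trans (Ix2_anti (by linarith : (4.8:ℝ) ≤ 4 * u)) num6c
      have hB := num3l
      have hJ := num6b
      have hBJ : (0.5607:ℝ) * 0.099 ≤ Iexp 2.3495 * Ix2 2.3495 :=
        mul_le_mul hB hJ (by norm_num) (le_trans (by norm_num) hB)
      have hnn : 0 ≤ 2 * (2.3495 - u) * (Iexp 2.3495 * Ix2 2.3495 - Ix2 (4 * u)) :=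
        mul_nonneg (by linarith) (by nlinarith)
      nlinarith [phi_a_neg]

lemma phi_pos_right {u : ℝ} (hu : 2.418 ≤ u) : 0 < Phi u := by
  rcases le_total u 5 with h | h
  · have hstep := phi_step (p := 2.418) (q := u) hu
    rw [show (4:ℝ) * 2.418 = 9.672 by norm_num] at hstep
    have hB : (0.3956 : ℝ) ≤ Iexp u := le_trans num7a (Iexp_anti h)
    have hJ : (0.0388 : ℝ) ≤ Ix2 u := le_trans num7b (Ix2_anti h)
    have hK := num7c
    have hBJ : (0.3956:ℝ) * 0.0388 ≤ Iexp u * Ix2 u :=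
      mul_le_mul hB hJ (by norm_num) (le_trans (by norm_num) hB)
    have hnn : 0 ≤ 2 * (u - 2.418) * (Iexp u * Ix2 u - Ix2 9.672) :=
      mul_nonneg (by linarith) (by nlinarith)
    nlinarith [phi_b_pos]
  · have h1 : Iexp u ≤ 0.3958 := le_trans (Iexp_anti h) num8
    have h2 : 0 ≤ Iexp u := Iexp_nonneg u
    have h3 : 0 ≤ Iexp (4 * u) := Iexp_nonneg _
    unfold Phi
    nlinarith

lemma phi_mono {p q : ℝ} (hp : 2.3495 ≤ p) (hpq : p < q) (hq : q ≤ 2.418) : Phi p < Phi q := by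
  have hstep := phi_step (p := p) (q := q) hpq.le
  have hB : (0.554 : ℝ) ≤ Iexp q := le_trans num5a (Iexp_anti hq)
  have hJ : (0.0961 : ℝ) ≤ Ix2 q := le_trans num5b (Ix2_anti hq)
  have hK : Ix2 (4 * p) ≤ 0.0154 :=
    le_trans (Ix2_anti (by linarith : (9.398:ℝ) ≤ 4 * p)) num5c
  have hBJ : (0.554:ℝ) * 0.0961 ≤ Iexp q * Ix2 q :=
    mul_le_mul hB hJ (by norm_num) (le_trans (by norm_num) hB)
  have hnn : 0 < 2 * (q - p) * (Iexp q * Ix2 q - Ix2 (4 * p)) :=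
    mul_pos (by linarith) (by nlinarith)
  linarith

lemma phi_root : ∃ u0 : ℝ, 2.3495 < u0 ∧ u0 < 2.418 ∧ Phi u0 = 0 := by
  have hsub := intermediate_value_Icc (by norm_num : (2.3495:ℝ) ≤ 2.418) phi_contOn
  have h0 : (0:ℝ) ∈ Set.Icc (Phi 2.3495) (Phi 2.418) :=
    ⟨phi_a_neg.le, phi_b_pos.le⟩
  obtain ⟨u0, hu0, hval⟩ := hsub h0
  refine ⟨u0, ?_, ?_, hval⟩
  · rcases lt_or_eq_of_le hu0.1 with h | h
    · exact h
    · exact absurd (h ▸ hval) (by simpa [← h] using phi_a_neg.ne)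
  · rcases lt_or_eq_of_le hu0.2 with h | h
    · exact h
    · rw [h] at hval; exact absurd hval phi_b_pos.ne'


lemma erf_eq (z : ℝ) (hz : 0 < z) : erf z = 2 / Real.sqrt π * (z * Iexp (z ^ 2)) := by
  unfold erf Iexp
  have h := intervalIntegral.integral_comp_mul_left (a := (0:ℝ)) (b := 1)
    (f := fun t => Real.exp (-t ^ 2)) (c := z) hz.ne'
  simp only [mul_zero, mul_one, smul_eq_mul] at h
  have h2 : (∫ x in (0:ℝ)..1, Real.exp (-(z * x) ^ 2))
      = ∫ x in (0:ℝ)..1, Real.exp (-(z ^ 2 * x ^ 2)) := by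
    apply intervalIntegral.integral_congr
    intro x _
    simp only
    rw [mul_pow]
  rw [h2] at h
  rw [h]
  field_simp

lemma reduction (m : ℝ) (hm : 0 < m) :
    ((1 / 3 : ℝ) = 1 / 2 + erf (Real.sqrt 2 * m * π) / (4 * Real.sqrt (2 * π) * m) -
        (erf (m * π / Real.sqrt 2) / (m * Real.sqrt (2 * π))) ^ 2)
    ↔ Phi (π ^ 2 * m ^ 2 / 2) = 0 := by
  have hπ := Real.pi_pos
  have hsπ : (0:ℝ) < Real.sqrt π := Real.sqrt_pos.mpr hπ
  have hs2 : (0:ℝ) < Real.sqrt 2 := by positivity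
  have hsπ2 : Real.sqrt π ^ 2 = π := Real.sq_sqrt hπ.le
  have hs22 : Real.sqrt 2 ^ 2 = 2 := Real.sq_sqrt (by norm_num)
  have h2π : Real.sqrt (2 * π) = Real.sqrt 2 * Real.sqrt π := Real.sqrt_mul (by norm_num) π
  have hz1 : (0:ℝ) < Real.sqrt 2 * m * π := by positivity
  have hz2 : (0:ℝ) < m * π / Real.sqrt 2 := by positivity
  have e1sq : (Real.sqrt 2 * m * π) ^ 2 = 4 * (π ^ 2 * m ^ 2 / 2) := by
    rw [mul_pow, mul_pow, hs22]; ring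
  have e2sq : (m * π / Real.sqrt 2) ^ 2 = π ^ 2 * m ^ 2 / 2 := by
    rw [div_pow, mul_pow, hs22]; ring
  rw [erf_eq _ hz1, erf_eq _ hz2, e1sq, e2sq, h2π]
  have key1 : ∀ A : ℝ, 2 / Real.sqrt π * (Real.sqrt 2 * m * π * A) /
      (4 * (Real.sqrt 2 * Real.sqrt π) * m) = A / 2 := by
    intro A
    field_simp
    ring_nf
    rw [hsπ2]
    ring
  have key2 : ∀ B : ℝ, 2 / Real.sqrt π * (m * π / Real.sqrt 2 * B) /
      (m * (Real.sqrt 2 * Real.sqrt π)) = B := by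
    intro B
    field_simp
    ring_nf
    rw [hsπ2, hs22]
    ring
  rw [key1, key2]
  unfold Phi
  constructor <;> intro h <;> linarith

set_option maxHeartbeats 1000000 in
/-- There is a unique `m > 0` with
`1/3 = 1/2 + erf(√2 m π)/(4 √(2π) m) − (erf(mπ/√2)/(m√(2π)))²`, and it lies in `(0.69, 0.70)`. -/
theorem exists_unique_variance_matching_weight :
    (∃! m : ℝ, 0 < m ∧
      (1 / 3 : ℝ) = 1 / 2 + erf (Real.sqrt 2 * m * π) / (4 * Real.sqrt (2 * π) * m) -
        (erf (m * π / Real.sqrt 2) / (m * Real.sqrt (2 * π))) ^ 2) ∧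
    ∀ m : ℝ, 0 < m →
      (1 / 3 : ℝ) = 1 / 2 + erf (Real.sqrt 2 * m * π) / (4 * Real.sqrt (2 * π) * m) -
        (erf (m * π / Real.sqrt 2) / (m * Real.sqrt (2 * π))) ^ 2 →
      0.69 < m ∧ m < 0.70 := by
  obtain ⟨u0, hu0a, hu0b, hu0root⟩ := phi_root
  have hu0pos : (0:ℝ) < u0 := by linarith
  have hπ := Real.pi_pos
  have hπl : (3.141592 : ℝ) < π := Real.pi_gt_d6
  have hπu : π < 3.141593 := Real.pi_lt_d6
  set m0 : ℝ := Real.sqrt (2 * u0) / π with hm0def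
  have hm0pos : 0 < m0 := div_pos (Real.sqrt_pos.mpr (by linarith)) hπ
  have hm0sq : π ^ 2 * m0 ^ 2 / 2 = u0 := by
    rw [hm0def, div_pow, Real.sq_sqrt (by linarith : (0:ℝ) ≤ 2 * u0)]
    field_simp
  have hm0eq := (reduction m0 hm0pos).mpr (by rw [hm0sq]; exact hu0root)
  have huniq : ∀ m : ℝ, 0 < m →
      ((1 / 3 : ℝ) = 1 / 2 + erf (Real.sqrt 2 * m * π) / (4 * Real.sqrt (2 * π) * m) -
        (erf (m * π / Real.sqrt 2) / (m * Real.sqrt (2 * π))) ^ 2) →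
      π ^ 2 * m ^ 2 / 2 = u0 ∧ (0.69 < m ∧ m < 0.70) := by
    intro m hm heq
    have hphiu : Phi (π ^ 2 * m ^ 2 / 2) = 0 := (reduction m hm).mp heq
    have hupos : 0 < π ^ 2 * m ^ 2 / 2 := by positivity
    have hua : (2.3495:ℝ) < π ^ 2 * m ^ 2 / 2 := by
      by_contra h
      push_neg at h
      exact absurd hphiu (phi_neg_left hupos h).ne
    have hub : π ^ 2 * m ^ 2 / 2 < 2.418 := by
      by_contra h
      push_neg at h
      exact absurd hphiu (phi_pos_right h).ne'
    have hequ : π ^ 2 * m ^ 2 / 2 = u0 := by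
      rcases lt_trichotomy (π ^ 2 * m ^ 2 / 2) u0 with h | h | h
      · have := phi_mono hua.le h hu0b.le
        rw [hphiu, hu0root] at this
        exact absurd this (lt_irrefl 0)
      · exact h
      · have := phi_mono hu0a.le h hub.le
        rw [hphiu, hu0root] at this
        exact absurd this (lt_irrefl 0)
    refine ⟨hequ, ?_, ?_⟩
    · by_contra h
      push_neg at h
      have h1 : m ^ 2 ≤ 0.69 ^ 2 := by nlinarith
      have h2 : π ^ 2 ≤ 3.141593 ^ 2 := by nlinarith
      have h3 : π ^ 2 * m ^ 2 ≤ 3.141593 ^ 2 * (0.69 ^ 2) :=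
        mul_le_mul h2 h1 (sq_nonneg m) (by norm_num)
      linarith [hua, h3]
    · by_contra h
      push_neg at h
      have h1 : (0.70:ℝ) ^ 2 ≤ m ^ 2 := by nlinarith
      have h2 : (3.141592:ℝ) ^ 2 ≤ π ^ 2 := by nlinarith
      have h3 : (3.141592:ℝ) ^ 2 * (0.70 ^ 2) ≤ π ^ 2 * m ^ 2 :=
        mul_le_mul h2 h1 (by norm_num) (sq_nonneg π)
      linarith [hub, h3]
  constructor
  · refine ⟨m0, ⟨hm0pos, hm0eq⟩, ?_⟩
    intro m hm
    obtain ⟨hequ, _⟩ := huniq m hm.1 hm.2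
    have hsq : m ^ 2 = m0 ^ 2 := by
      have h1 : π ^ 2 * m ^ 2 / 2 = π ^ 2 * m0 ^ 2 / 2 := by rw [hequ, hm0sq]
      have h2 : π ^ 2 * m ^ 2 = π ^ 2 * m0 ^ 2 := by linarith
      exact mul_left_cancel₀ (by positivity : (π:ℝ) ^ 2 ≠ 0) h2
    apply le_antisymm <;> nlinarith [hsq, hm.1, hm0pos]
  · intro m hm heq
    exact (huniq m hm heq).2
end

section
/- Let N ≥ 1, let w₁, …, w_N be pairwise distinct positive reals, let λ₁, …, λ_N be nonzero reals, let φ₀, φ₁, …, φ_N be reals, and define f(x) = φ₀ + Σ_{k=1}^N λ_k cos(π w_k x + φ_k). If f is 2-periodic, i.e., f(x + 2) = f(x) for all x ∈ ℝ, then every w_k is a (positive) integer. -/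
open Real Finset Matrix

lemma hasDerivAt_sum_sin (N : ℕ) (a b c : Fin N → ℝ) (x : ℝ) :
    HasDerivAt (fun x => ∑ k : Fin N, c k * Real.sin (a k * x + b k))
      (∑ k : Fin N, (c k * a k) * Real.cos (a k * x + b k)) x := by
  apply HasDerivAt.fun_sum
  intro k _
  have h1 : HasDerivAt (fun x => a k * x + b k) (a k) x := by
    simpa using ((hasDerivAt_id x).const_mul (a k)).add_const (b k)
  have h2 := (Real.hasDerivAt_sin (a k * x + b k)).comp x h1
  have h3 := h2.const_mul (c k)
  convert h3 using 1
  · rfl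
  · rfl
  ring

lemma hasDerivAt_sum_cos (N : ℕ) (a b c : Fin N → ℝ) (x : ℝ) :
    HasDerivAt (fun x => ∑ k : Fin N, c k * Real.cos (a k * x + b k))
      (∑ k : Fin N, -((c k * a k) * Real.sin (a k * x + b k))) x := by
  apply HasDerivAt.fun_sum
  intro k _
  have h1 : HasDerivAt (fun x => a k * x + b k) (a k) x := by
    simpa using ((hasDerivAt_id x).const_mul (a k)).add_const (b k)
  have h2 := (Real.hasDerivAt_cos (a k * x + b k)).comp x h1
  have h3 := h2.const_mul (c k)
  convert h3 using 1
  · rfl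
  · rfl
  ring

lemma step_lemma (N : ℕ) (a b c : Fin N → ℝ)
    (h : ∀ x, ∑ k : Fin N, c k * Real.sin (a k * x + b k) = 0) :
    ∀ x, ∑ k : Fin N, (c k * (a k)^2) * Real.sin (a k * x + b k) = 0 := by
  have hF : (fun x => ∑ k : Fin N, c k * Real.sin (a k * x + b k)) = fun _ => 0 :=
    funext h
  have h1 : ∀ x, ∑ k : Fin N, (c k * a k) * Real.cos (a k * x + b k) = 0 := by
    intro x
    have hd := hasDerivAt_sum_sin N a b c x
    rw [hF] at hd
    exact (hd.unique (hasDerivAt_const x 0))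
  have hG : (fun x => ∑ k : Fin N, (c k * a k) * Real.cos (a k * x + b k)) = fun _ => 0 :=
    funext h1
  intro x
  have hd := hasDerivAt_sum_cos N a b (fun k => c k * a k) x
  rw [hG] at hd
  have h2 := hd.unique (hasDerivAt_const x 0)
  have h3 : ∑ k : Fin N, ((c k * a k) * a k) * Real.sin (a k * x + b k) = 0 := by
    have h4 : ∑ k : Fin N, ((c k * a k) * a k) * Real.sin (a k * x + b k)
        = -∑ k : Fin N, -((c k * a k) * Real.sin (a k * x + b k) * a k) := by
      rw [← Finset.sum_neg_distrib]
      apply Finset.sum_congr rfl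
      intro k _
      ring
    rw [h4]
    have h5 : ∑ k : Fin N, -((c k * a k) * Real.sin (a k * x + b k) * a k) = 0 := by
      rw [← h2]
      apply Finset.sum_congr rfl
      intro k _
      ring
    rw [h5, neg_zero]
  rw [← h3]
  apply Finset.sum_congr rfl
  intro k _
  ring

lemma iterated_lemma (N : ℕ) (a b c : Fin N → ℝ)
    (h : ∀ x, ∑ k : Fin N, c k * Real.sin (a k * x + b k) = 0) :
    ∀ (m : ℕ) (x : ℝ), ∑ k : Fin N, c k * ((a k)^2)^m * Real.sin (a k * x + b k) = 0 := by
  intro m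
  induction m with
  | zero => simpa using h
  | succ m ih =>
    have := step_lemma N a b (fun k => c k * ((a k)^2)^m) ih
    intro x
    have h2 := this x
    rw [← h2]
    apply Finset.sum_congr rfl
    intro k _
    ring

lemma vandermonde_zero (N : ℕ) (t v : Fin N → ℝ) (ht : Function.Injective t)
    (h : ∀ m : Fin N, ∑ k : Fin N, v k * t k ^ (m : ℕ) = 0) : ∀ k, v k = 0 := by
  by_contra hc
  push_neg at hc
  obtain ⟨k, hk⟩ := hc
  have hv : v ≠ 0 := fun h0 => hk (congrFun h0 k)
  have hdet : (Matrix.vandermonde t).det ≠ 0 := by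
    rw [Matrix.det_vandermonde_ne_zero_iff]; exact ht
  have hmv : ((Matrix.vandermonde t)ᵀ).mulVec v = 0 := by
    funext m
    have := h m
    simp only [Matrix.mulVec, Matrix.transpose_apply, Matrix.vandermonde_apply,
      dotProduct, Pi.zero_apply]
    rw [← this]
    apply Finset.sum_congr rfl
    intro j _
    ring
  have hd0 : ((Matrix.vandermonde t)ᵀ).det = 0 :=
    Matrix.exists_mulVec_eq_zero_iff.mp ⟨v, hv, hmv⟩
  rw [Matrix.det_transpose] at hd0
  exact hdet hd0

/-- If the output `f(x) = φ₀ + Σ_k λ_k cos(π w_k x + φ_k)` of a one-hidden-layer Fourier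
Neural Network, with pairwise distinct positive weights `w_k` and nonzero weights `λ_k`, is
2-periodic, then every weight `w_k` is a positive integer. -/
theorem periodic_fnn_weights_are_integers
    (N : ℕ) (hN : 1 ≤ N) (w lam φ : Fin N → ℝ) (φ₀ : ℝ)
    (hw_distinct : Function.Injective w)
    (hw_pos : ∀ k, 0 < w k)
    (hlam : ∀ k, lam k ≠ 0)
    (f : ℝ → ℝ)
    (hf : ∀ x : ℝ, f x = φ₀ + ∑ k : Fin N, lam k * Real.cos (π * w k * x + φ k))
    (hper : ∀ x : ℝ, f (x + 2) = f x) :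
    ∀ k, ∃ n : ℕ, 0 < n ∧ w k = n := by
  set a : Fin N → ℝ := fun k => π * w k with ha
  set b : Fin N → ℝ := fun k => φ k + π * w k with hb
  set c : Fin N → ℝ := fun k => lam k * (-2 * Real.sin (π * w k)) with hc
  have key : ∀ x, ∑ k : Fin N, c k * Real.sin (a k * x + b k) = 0 := by
    intro x
    have h1 := hper x
    rw [hf, hf] at h1
    have h2 : ∑ k : Fin N, (lam k * Real.cos (π * w k * (x+2) + φ k)
        - lam k * Real.cos (π * w k * x + φ k)) = 0 := by
      rw [Finset.sum_sub_distrib]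
      linarith
    rw [← h2]
    apply Finset.sum_congr rfl
    intro k _
    have hcc := Real.cos_sub_cos (π * w k * (x+2) + φ k) (π * w k * x + φ k)
    have harg1 : (π * w k * (x+2) + φ k + (π * w k * x + φ k))/2
        = π * w k * x + (φ k + π * w k) := by ring
    have harg2 : (π * w k * (x+2) + φ k - (π * w k * x + φ k))/2 = π * w k := by ring
    rw [harg1, harg2] at hcc
    simp only [ha, hb, hc]
    rw [← mul_sub, hcc]
    ring
  -- all c k = 0
  have ha_pos : ∀ k, 0 < a k := fun k => mul_pos pi_pos (hw_pos k)
  have ha_inj : Function.Injective a := fun i j hij => by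
    apply hw_distinct
    have : π * w i = π * w j := hij
    exact mul_left_cancel₀ (ne_of_gt pi_pos) this
  have ht_inj : Function.Injective (fun k => (a k)^2) := by
    intro i j hij
    apply ha_inj
    have h1 : (a i)^2 = (a j)^2 := hij
    nlinarith [ha_pos i, ha_pos j]
  have hc0 : ∀ k, c k = 0 := by
    intro k
    -- pick x making sin = 1
    set x₀ : ℝ := (π/2 - b k) / a k with hx₀
    have hvz : ∀ j, c j * Real.sin (a j * x₀ + b j) = 0 := by
      apply vandermonde_zero N (fun j => (a j)^2)
        (fun j => c j * Real.sin (a j * x₀ + b j)) ht_inj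
      intro m
      have := iterated_lemma N a b c key m x₀
      rw [← this]
      apply Finset.sum_congr rfl
      intro j _
      ring
    have := hvz k
    have hsin : Real.sin (a k * x₀ + b k) = 1 := by
      have hak : a k ≠ 0 := ne_of_gt (ha_pos k)
      have harg : a k * x₀ + b k = π/2 := by
        rw [hx₀, mul_div_cancel₀ _ hak]
        ring
      rw [harg, Real.sin_pi_div_two]
    rw [hsin, mul_one] at this
    exact this
  intro k
  have hck := hc0 k
  simp only [hc] at hck
  have hs : Real.sin (π * w k) = 0 := by
    rcases mul_eq_zero.mp hck with h | h
    · exact absurd h (hlam k)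
    · rcases mul_eq_zero.mp h with h | h
      · norm_num at h
      · exact h
  rw [Real.sin_eq_zero_iff] at hs
  obtain ⟨n, hn⟩ := hs
  have hwn : w k = (n : ℝ) := by
    have h1 : π * w k = π * (n : ℝ) := by linarith [hn]
    exact mul_left_cancel₀ pi_ne_zero h1
  have hn_pos : 0 < n := by
    have := hw_pos k
    rw [hwn] at this
    exact_mod_cast this
  refine ⟨n.toNat, ?_, ?_⟩
  · omega
  · rw [hwn]
    exact_mod_cast congrArg (fun z : ℤ => (z : ℝ)) (Int.toNat_of_nonneg hn_pos.le).symm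
end
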